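/- Let G = (V, E) be a connected graph and let Ĝ = (V, E ∪ F) be an augmentation with F ⊆ binom(V,2) \ E. A vector x ∈ {0,1}^{E ∪ F} is the characteristic vector of a multicut of Ĝ lifted from G if and only if x satisfies: (i) for every cycle C in G and every edge f of C, x_f ≤ Σ_{e ∈ E_C \ {f}} x_e; (ii) for every uv ∈ F and every uv-path P in G, x_{uv} ≤ Σ_{e ∈ E_P} x_e; (iii) for every uv ∈ F and every uv-cut δ(U) in G, 1 − x_{uv} ≤ Σ_{e ∈ δ(U)} (1 − x_e). -/

import Mathlib

open Finset

open scoped Classical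

variable {V : Type*}

/-- A decomposition of a graph `G`: a partition of the node set all of whose blocks
induce connected subgraphs. -/
def IsDecomposition (G : SimpleGraph V) (P : Set (Set V)) : Prop :=
  Setoid.IsPartition P ∧ ∀ U ∈ P, (G.induce U).Connected

/-- Two nodes lie in a common block of `P`. -/
def SameBlock (P : Set (Set V)) (u v : V) : Prop :=
  ∃ U ∈ P, u ∈ U ∧ v ∈ U

/-- The edge `e` straddles two distinct blocks of `P`. -/
def Crosses (P : Set (Set V)) (e : Sym2 V) : Prop :=
  ∃ u v, e = s(u, v) ∧ ¬ SameBlock P u v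

/-- The multicut of `G` induced by a decomposition `P`. -/
def inducedMulticut (G : SimpleGraph V) (P : Set (Set V)) : Set (Sym2 V) :=
  {e | e ∈ G.edgeSet ∧ Crosses P e}

/-- `M` is a multicut of `G`. -/
def IsMulticut (G : SimpleGraph V) (M : Set (Sym2 V)) : Prop :=
  ∃ P, IsDecomposition G P ∧ M = inducedMulticut G P

/-- The characteristic vector (in the ambient space `Sym2 V → ℝ`, with coordinates
outside the edge set of `H` pinned to `0`) of the multicut of `H` induced by `P`. -/
noncomputable def multicutVec (H : SimpleGraph V) (P : Set (Set V)) : Sym2 V → ℝ :=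
  fun e => if e ∈ H.edgeSet ∧ Crosses P e then 1 else 0

/-- Characteristic vectors of multicuts of `H` lifted from `G`. -/
def liftedVectors (G H : SimpleGraph V) : Set (Sym2 V → ℝ) :=
  {x | ∃ P, IsDecomposition G P ∧ x = multicutVec H P}

/-- The lifted multicut polytope with respect to `G` and `H`. -/
def LMC (G H : SimpleGraph V) : Set (Sym2 V → ℝ) :=
  convexHull ℝ (liftedVectors G H)

/-- The inequality `f x ≤ b` is valid for `P` and its equality set has affine dimension
`|E ∪ F| - 1`, i.e. one less than the dimension of the corresponding lifted multicut
polytope for the augmented graph `H`. -/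
def DefinesFacet (H : SimpleGraph V) (P : Set (Sym2 V → ℝ))
    (f : (Sym2 V → ℝ) → ℝ) (b : ℝ) : Prop :=
  (∀ x ∈ P, f x ≤ b) ∧
  Module.finrank ℝ (affineSpan ℝ {x | x ∈ P ∧ f x = b}).direction + 1 = Nat.card H.edgeSet

/-- The set of edges of `G` crossing the cut induced by `U`. -/
noncomputable def cutFinset {V : Type*} [Fintype V] (G : SimpleGraph V) (U : Set V) :
    Finset (Sym2 V) :=
  Finset.univ.filter (fun e => e ∈ G.edgeSet ∧ ∃ a b, e = s(a, b) ∧ a ∈ U ∧ b ∉ U)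

namespace LMCAux

lemma sameBlock_symm {P : Set (Set V)} {u v : V} (h : SameBlock P u v) : SameBlock P v u := by
  obtain ⟨U, hU, hu, hv⟩ := h; exact ⟨U, hU, hv, hu⟩

lemma sameBlock_refl {P : Set (Set V)} (hP : Setoid.IsPartition P) (u : V) : SameBlock P u u := by
  obtain ⟨U, ⟨hU, hu⟩, -⟩ := hP.2 u
  exact ⟨U, hU, hu, hu⟩

lemma sameBlock_trans {P : Set (Set V)} (hP : Setoid.IsPartition P) {u v w : V}
    (h1 : SameBlock P u v) (h2 : SameBlock P v w) : SameBlock P u w := by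
  obtain ⟨U, hU, hu, hv⟩ := h1
  obtain ⟨W, hW, hv', hw⟩ := h2
  obtain ⟨B, -, hun⟩ := hP.2 v
  have hUW : U = W := (hun U ⟨hU, hv⟩).trans (hun W ⟨hW, hv'⟩).symm
  exact ⟨U, hU, hu, hUW ▸ hw⟩

lemma crosses_iff (P : Set (Set V)) (u v : V) :
    Crosses P s(u, v) ↔ ¬ SameBlock P u v := by
  constructor
  · rintro ⟨a, b, hab, h⟩ hs
    rw [Sym2.eq_iff] at hab
    rcases hab with ⟨rfl, rfl⟩ | ⟨rfl, rfl⟩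
    · exact h hs
    · exact h (sameBlock_symm hs)
  · intro h; exact ⟨u, v, rfl, h⟩

lemma exists_crossing_edge {G : SimpleGraph V} {P : Set (Set V)} (hP : Setoid.IsPartition P) :
    ∀ {u v : V} (W : G.Walk u v), ¬ SameBlock P u v → ∃ e ∈ W.edges, Crosses P e := by
  intro u v W
  induction W with
  | nil => exact fun h => absurd (sameBlock_refl hP _) h
  | @cons a b c h W ih =>
    intro hnot
    by_cases hs : SameBlock P a b
    · obtain ⟨e, he, hc⟩ := ih (fun hbv => hnot (sameBlock_trans hP hs hbv))
      exact ⟨e, by simp [he], hc⟩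
    · exact ⟨s(a, b), by simp, (crosses_iff P a b).2 hs⟩

lemma reachable_induce_of_walk {G' G : SimpleGraph V} (hle : G' ≤ G) {S : Set V} :
    ∀ {a b : V} (W : G'.Walk a b) (hS : ∀ z ∈ W.support, z ∈ S),
      (G.induce S).Reachable ⟨a, hS a W.start_mem_support⟩ ⟨b, hS b W.end_mem_support⟩ := by
  intro a b W
  induction W with
  | nil => intro hS; exact SimpleGraph.Reachable.refl _
  | @cons a b c h W ih =>
    intro hS
    have hb : b ∈ S := hS b (by simp)
    have ha : a ∈ S := hS a (by simp)
    have hadj : (G.induce S).Adj ⟨a, ha⟩ ⟨b, hb⟩ := hle h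
    exact hadj.reachable.trans (ih (fun z hz => hS z (by simp [hz])))

lemma isPartition_pair {U : Set V} (h1 : U.Nonempty) (h2 : Uᶜ.Nonempty) :
    Setoid.IsPartition {U, Uᶜ} := by
  constructor
  · rintro (h | h)
    · exact h1.ne_empty h.symm
    · exact h2.ne_empty h.symm
  · intro a
    by_cases ha : a ∈ U
    · refine ⟨U, ⟨Or.inl rfl, ha⟩, ?_⟩
      rintro S ⟨(rfl | rfl), hS⟩
      · rfl
      · exact absurd ha hS
    · refine ⟨Uᶜ, ⟨Or.inr rfl, ha⟩, ?_⟩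
      rintro S ⟨(rfl | rfl), hS⟩
      · exact absurd hS ha
      · rfl

lemma mc_nonneg (H : SimpleGraph V) (P : Set (Set V)) (e : Sym2 V) : 0 ≤ multicutVec H P e := by
  unfold multicutVec; split <;> norm_num

lemma mc_le_one (H : SimpleGraph V) (P : Set (Set V)) (e : Sym2 V) : multicutVec H P e ≤ 1 := by
  unfold multicutVec; split <;> norm_num

lemma exists_boundary_in_block {G : SimpleGraph V} {W U : Set V} :
    ∀ {s t : ↥W} (q : (G.induce W).Walk s t), (s : V) ∈ U → (t : V) ∉ U →
      ∃ a b : V, G.Adj a b ∧ a ∈ W ∧ b ∈ W ∧ a ∈ U ∧ b ∉ U := by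
  intro s t q
  induction q with
  | nil => intro hs ht; exact absurd hs ht
  | @cons a b c h q ih =>
    intro hs ht
    by_cases hb : (b : V) ∈ U
    · exact ih hb ht
    · exact ⟨a, b, h, a.2, b.2, hs, hb⟩

/-- The spanning subgraph of `G` consisting of the edges where `x` vanishes. -/
def zeroSub (G : SimpleGraph V) (x : Sym2 V → ℝ) : SimpleGraph V where
  Adj a b := G.Adj a b ∧ x s(a, b) = 0
  symm := ⟨fun a b h => ⟨h.1.symm, by rw [Sym2.eq_swap]; exact h.2⟩⟩
  loopless := ⟨fun a h => G.loopless.irrefl a h.1⟩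

end LMCAux

open LMCAux

/-- a binary vector on the edges of the augmented graph `Gh` is the
characteristic vector of a multicut of `Gh` lifted from `G` iff it satisfies the cycle,
path and cut inequalities. -/
theorem liftedMulticut_iff_cycle_path_cut_inequalities
    {V : Type*} [Fintype V] (G Gh : SimpleGraph V)
    (hG : G.Connected) (hle : G ≤ Gh)
    (x : Sym2 V → ℝ)
    (h01 : ∀ e ∈ Gh.edgeSet, x e = 0 ∨ x e = 1)
    (h0 : ∀ e ∉ Gh.edgeSet, x e = 0) :
    x ∈ liftedVectors G Gh ↔
      ((∀ (w : V) (c : G.Walk w w), c.IsCycle → ∀ f ∈ c.edges,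
          x f ≤ ∑ e ∈ c.edges.toFinset.erase f, x e) ∧
       (∀ u v : V, Gh.Adj u v → ¬ G.Adj u v → ∀ p : G.Walk u v, p.IsPath →
          x s(u, v) ≤ ∑ e ∈ p.edges.toFinset, x e) ∧
       (∀ u v : V, Gh.Adj u v → ¬ G.Adj u v → ∀ U : Set V,
          u ∈ U → v ∉ U → IsDecomposition G {U, Uᶜ} →
          1 - x s(u, v) ≤ ∑ e ∈ cutFinset G U, (1 - x e))) := by
  classical
  constructor
  · rintro ⟨P, ⟨hPart, hConn⟩, rfl⟩
    classical
    set x := multicutVec Gh P with hxdef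
    have hx1 : ∀ e ∈ Gh.edgeSet, Crosses P e → x e = 1 := fun e h1 h2 => if_pos ⟨h1, h2⟩
    have hx01 : ∀ e, x e = 0 ∨ x e = 1 := by
      intro e; unfold x; unfold multicutVec; split
      · exact Or.inr rfl
      · exact Or.inl rfl
    have hGsub : G.edgeSet ⊆ Gh.edgeSet := SimpleGraph.edgeSet_mono hle
    refine ⟨?_, ?_, ?_⟩
    · -- cycle inequalities
      intro w c hc f hf
      rcases hx01 f with h0f | h1f
      · rw [h0f]; exact Finset.sum_nonneg fun e _ => mc_nonneg _ _ _
      · have hcr : f ∈ Gh.edgeSet ∧ Crosses P f := by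
          by_contra hcon
          have : x f = 0 := if_neg hcon
          rw [this] at h1f; norm_num at h1f
        obtain ⟨-, a, b, rfl, hnsb⟩ := hcr
        have ha : a ∈ c.support := c.fst_mem_support_of_mem_edges hf
        have hperm : List.Perm (c.rotate a ha).edges c.edges := (c.rotate_edges a ha).perm
        have hfc' : s(a, b) ∈ (c.rotate a ha).edges := hperm.mem_iff.2 hf
        have hb : b ∈ (c.rotate a ha).support := (c.rotate a ha).snd_mem_support_of_mem_edges hfc'
        have hnodup : (c.rotate a ha).edges.Nodup := hperm.nodup_iff.2 hc.edges_nodup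
        set q1 := (c.rotate a ha).takeUntil b hb with hq1
        set q2 := (c.rotate a ha).dropUntil b hb with hq2
        have hsplit : q1.append q2 = c.rotate a ha := (c.rotate a ha).take_spec hb
        have hedges : (c.rotate a ha).edges = q1.edges ++ q2.edges := by
          rw [← SimpleGraph.Walk.edges_append, hsplit]
        rw [hedges] at hnodup hfc'
        have hdisj := List.disjoint_of_nodup_append hnodup
        -- find a crossing edge e ≠ s(a,b) among cycle edges
        have hmain : ∃ e, e ∈ q1.edges ++ q2.edges ∧ e ≠ s(a, b) ∧ Crosses P e := by
          rcases List.mem_append.1 hfc' with h1 | h2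
          · obtain ⟨e, he, hcr⟩ := exists_crossing_edge hPart q2
              (fun hsb => hnsb (sameBlock_symm hsb))
            exact ⟨e, List.mem_append.2 (Or.inr he), fun heq => (hdisj (heq ▸ h1)) (heq ▸ he), hcr⟩
          · obtain ⟨e, he, hcr⟩ := exists_crossing_edge hPart q1 hnsb
            exact ⟨e, List.mem_append.2 (Or.inl he), fun heq => (hdisj (heq ▸ he)) (heq ▸ h2), hcr⟩
        obtain ⟨e, hemem, hene, hcr⟩ := hmain
        have hece : e ∈ c.edges := hperm.mem_iff.1 (hedges ▸ hemem)
        have hxe : x e = 1 := hx1 e (hGsub (c.edges_subset_edgeSet hece)) hcr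
        calc x s(a, b) = 1 := h1f
          _ = x e := hxe.symm
          _ ≤ ∑ e' ∈ c.edges.toFinset.erase s(a, b), x e' := by
              refine Finset.single_le_sum (f := fun e' => x e') (fun e' _ => mc_nonneg _ _ _) ?_
              exact Finset.mem_erase.2 ⟨hene, List.mem_toFinset.2 hece⟩
    · -- path inequalities
      intro u v huv hnadj p hp
      rcases hx01 s(u, v) with h0f | h1f
      · rw [h0f]; exact Finset.sum_nonneg fun e _ => mc_nonneg _ _ _
      · have hnsb : ¬ SameBlock P u v := by
          intro hsb
          have hcr : ¬ Crosses P s(u, v) := fun hc => (crosses_iff P u v).1 hc hsb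
          have : x s(u, v) = 0 := if_neg (fun h => hcr h.2)
          rw [this] at h1f; norm_num at h1f
        obtain ⟨e, he, hcr⟩ := exists_crossing_edge hPart p hnsb
        have hxe : x e = 1 := hx1 e (hGsub (p.edges_subset_edgeSet he)) hcr
        calc x s(u, v) = 1 := h1f
          _ = x e := hxe.symm
          _ ≤ ∑ e' ∈ p.edges.toFinset, x e' :=
              Finset.single_le_sum (f := fun e' => x e') (fun e' _ => mc_nonneg _ _ _) (List.mem_toFinset.2 he)
    · -- cut inequalities
      intro u v huv hnadj U hu hv hdec
      have hsm : s(u, v) ∈ Gh.edgeSet := huv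
      rcases hx01 s(u, v) with h0f | h1f
      · -- u, v in the same block
        have hsb : SameBlock P u v := by
          by_contra hns
          have := hx1 _ hsm ((crosses_iff P u v).2 hns)
          rw [h0f] at this; norm_num at this
        obtain ⟨W, hWP, huW, hvW⟩ := hsb
        obtain ⟨q⟩ := (hConn W hWP).preconnected ⟨u, huW⟩ ⟨v, hvW⟩
        obtain ⟨a, b, hadj, haW, hbW, haU, hbU⟩ := exists_boundary_in_block q hu hv
        have hcut : s(a, b) ∈ cutFinset G U := by
          simp only [cutFinset, Finset.mem_filter, Finset.mem_univ, true_and]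
          exact ⟨hadj, a, b, rfl, haU, hbU⟩
        have hxab : x s(a, b) = 0 := by
          refine if_neg ?_
          rintro ⟨-, hcr⟩
          exact (crosses_iff P a b).1 hcr ⟨W, hWP, haW, hbW⟩
        calc 1 - x s(u, v) ≤ 1 := by have := mc_nonneg Gh P s(u, v); unfold x; linarith
          _ = 1 - x s(a, b) := by rw [hxab]; ring
          _ ≤ ∑ e ∈ cutFinset G U, (1 - x e) := by
              refine Finset.single_le_sum (f := fun e' => 1 - x e') (fun e' _ => ?_) hcut
              have := mc_le_one Gh P e'; show (0:ℝ) ≤ 1 - x e'; unfold x; linarith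
      · rw [h1f]
        have : (0:ℝ) ≤ ∑ e ∈ cutFinset G U, (1 - x e) := by
          refine Finset.sum_nonneg fun e' _ => ?_
          have := mc_le_one Gh P e'; unfold x; linarith
        linarith

  · rintro ⟨hcyc, hpath, hcut⟩
    classical
    let G0 : SimpleGraph V := zeroSub G x
    have hG0le : G0 ≤ G := fun {a b} h => h.1
    have hx0e : ∀ e, e ∈ G0.edgeSet → x e = 0 := by
      intro e
      induction e using Sym2.ind with
      | _ a b => exact fun h => h.2
    have hmapedges : ∀ {a b : V} (W : G0.Walk a b), (W.mapLe hG0le).edges = W.edges := by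
      intro a b W
      rw [SimpleGraph.Walk.mapLe, SimpleGraph.Walk.edges_map]
      have hid : ⇑(SimpleGraph.Hom.ofLE hG0le) = id := rfl
      rw [hid, Sym2.map_id, List.map_id]
    -- claim (b): an edge with x = 1 cannot join G0-reachable endpoints
    have hone : ∀ u v : V, Gh.Adj u v → x s(u, v) = 1 → ¬ G0.Reachable u v := by
      intro u v huv hx1 hr
      obtain ⟨W⟩ := hr
      set q : G.Walk u v := ((W.mapLe hG0le).toPath : G.Walk u v) with hqdef
      have hqpath : q.IsPath := ((W.mapLe hG0le).toPath).property
      have hq0 : ∀ e ∈ q.edges, x e = 0 := by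
        intro e he
        have h1 : e ∈ (W.mapLe hG0le).edges := SimpleGraph.Walk.edges_toPath_subset _ he
        rw [hmapedges W] at h1
        exact hx0e e (W.edges_subset_edgeSet h1)
      by_cases hadj : G.Adj u v
      · -- use a cycle inequality
        have hne : s(u, v) ∉ q.reverse.edges := by
          rw [SimpleGraph.Walk.edges_reverse, List.mem_reverse]
          intro hmem
          rw [hq0 _ hmem] at hx1; norm_num at hx1
        set c : G.Walk u u := SimpleGraph.Walk.cons hadj q.reverse with hcdef
        have hcyc' : c.IsCycle := by
          rw [hcdef, SimpleGraph.Walk.cons_isCycle_iff]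
          exact ⟨hqpath.reverse, hne⟩
        have hmem : s(u, v) ∈ c.edges := by
          rw [hcdef, SimpleGraph.Walk.edges_cons]
          exact List.mem_cons_self
        have := hcyc u c hcyc' s(u, v) hmem
        have hsum : ∑ e ∈ c.edges.toFinset.erase s(u, v), x e = 0 := by
          refine Finset.sum_eq_zero fun e he => ?_
          rw [Finset.mem_erase, List.mem_toFinset, hcdef, SimpleGraph.Walk.edges_cons] at he
          rcases List.mem_cons.1 he.2 with h | h
          · exact absurd h he.1
          · exact hq0 e (by rwa [SimpleGraph.Walk.edges_reverse, List.mem_reverse] at h)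
        rw [hx1, hsum] at this; norm_num at this
      · -- use a path inequality
        have := hpath u v huv hadj q hqpath
        have hsum : ∑ e ∈ q.edges.toFinset, x e = 0 :=
          Finset.sum_eq_zero fun e he => hq0 e (List.mem_toFinset.1 he)
        rw [hx1, hsum] at this; norm_num at this
    -- claim (a): an edge with x = 0 joins G0-reachable endpoints
    have hzero : ∀ u v : V, Gh.Adj u v → x s(u, v) = 0 → G0.Reachable u v := by
      intro u v huv hx0
      by_cases hadj : G.Adj u v
      · exact SimpleGraph.Adj.reachable ⟨hadj, hx0⟩
      by_contra hnr
      set A : Set V := {w | G0.Reachable u w} with hAdef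
      have huA : u ∈ A := SimpleGraph.Reachable.refl u
      have hvA : v ∉ A := hnr
      have hAclosed : ∀ a b : V, a ∈ A → G0.Adj a b → b ∈ A :=
        fun a b ha hab => ha.trans hab.reachable
      have hAreachmem : ∀ {a z : V} (W : G0.Walk u a), z ∈ W.support → z ∈ A :=
        fun {a z} W hz => ⟨W.takeUntil z hz⟩
      set B : Set V := {w | ∃ p : G.Walk v w, ∀ z ∈ p.support, z ∉ A} with hBdef
      have hvB : v ∈ B := ⟨SimpleGraph.Walk.nil, by intro z hz; simp only [SimpleGraph.Walk.support_nil, List.mem_singleton] at hz; subst hz; exact hvA⟩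
      have hBA : ∀ w ∈ B, w ∉ A := fun w hw => hw.choose_spec w hw.choose.end_mem_support
      have hBclosed : ∀ a b : V, a ∈ B → G.Adj a b → b ∉ A → b ∈ B := by
        rintro a b ⟨p, hp⟩ hab hbA
        refine ⟨p.concat hab, ?_⟩
        intro z hz
        rw [SimpleGraph.Walk.support_concat, List.mem_append] at hz
        rcases hz with h | h
        · exact hp z h
        · rw [List.mem_singleton] at h; subst h; exact hbA
      have huB : u ∉ B := fun h => hBA u h huA
      -- the cut given by the complement of B
      set U : Set V := Bᶜ with hUdef
      have hu : u ∈ U := huB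
      have hv : v ∉ U := fun h => h hvB
      have hUc : Uᶜ = B := compl_compl B
      -- Bᶜ induces a connected subgraph
      have hAB : A ⊆ Bᶜ := fun w hw hwB => hBA w hwB hw
      have hAreach : ∀ (w : V) (hw : w ∈ A), (G.induce Bᶜ).Reachable ⟨w, hAB hw⟩ ⟨u, hAB huA⟩ := by
        intro w hw
        obtain ⟨W⟩ := hw
        exact (reachable_induce_of_walk hG0le W (fun z hz => hAB (hAreachmem W hz))).symm
      have hkey : ∀ (a' b' : V) (p : G.Walk a' b') (ha' : a' ∉ B) (hb' : b' ∈ A),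
          (G.induce Bᶜ).Reachable ⟨a', ha'⟩ ⟨u, hAB huA⟩ := by
        intro a' b' p
        induction p with
        | nil => intro ha' hb'; exact hAreach _ hb'
        | @cons a b c hadj' p ih =>
          intro ha' hb'
          by_cases hwA : a ∈ A
          · exact hAreach a hwA
          · have hbB : b ∉ B := by
              intro hbB
              exact ha' (hBclosed b a hbB hadj'.symm hwA)
            have hadj2 : (G.induce Bᶜ).Adj ⟨a, ha'⟩ ⟨b, hbB⟩ := hadj'
            exact hadj2.reachable.trans (ih hbB hb')
      have hUconn : (G.induce U).Connected := by
        rw [SimpleGraph.connected_iff]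
        refine ⟨?_, ⟨⟨u, hu⟩⟩⟩
        rintro ⟨a, ha⟩ ⟨b, hb⟩
        exact (hkey a u ((hG.preconnected a u).some) ha huA).trans (hkey b u ((hG.preconnected b u).some) hb huA).symm
      -- B induces a connected subgraph
      have hBreach : ∀ (w : V) (hw : w ∈ B), (G.induce B).Reachable ⟨v, hvB⟩ ⟨w, hw⟩ := by
        rintro w ⟨p, hp⟩
        have hsupp : ∀ z ∈ p.support, z ∈ B := by
          intro z hz
          refine ⟨p.takeUntil z hz, fun y hy => hp y (p.support_takeUntil_subset hz hy)⟩
        exact reachable_induce_of_walk le_rfl p hsupp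
      have hUcconn : (G.induce Uᶜ).Connected := by
        rw [hUc, SimpleGraph.connected_iff]
        refine ⟨?_, ⟨⟨v, hvB⟩⟩⟩
        rintro ⟨a, ha⟩ ⟨b, hb⟩
        exact (hBreach a ha).symm.trans (hBreach b hb)
      have hdec : IsDecomposition G {U, Uᶜ} := by
        refine ⟨isPartition_pair ⟨u, hu⟩ ⟨v, hUc ▸ hvB⟩, ?_⟩
        rintro S (rfl | rfl)
        · exact hUconn
        · exact hUcconn
      have hineq := hcut u v huv hadj U hu hv hdec
      have hsum : ∑ e ∈ cutFinset G U, (1 - x e) = 0 := by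
        refine Finset.sum_eq_zero fun e he => ?_
        simp only [cutFinset, Finset.mem_filter, Finset.mem_univ, true_and] at he
        obtain ⟨heG, a, b, rfl, haU, hbU⟩ := he
        have hab : G.Adj a b := heG
        have hbB : b ∈ B := not_not.1 hbU
        have : x s(a, b) = 1 := by
          rcases h01 _ (SimpleGraph.edgeSet_mono hle heG) with h | h
          · exfalso
            have hadj0 : G0.Adj a b := ⟨hab, h⟩
            by_cases haA : a ∈ A
            · exact hBA b hbB (hAclosed a b haA hadj0)
            · exact haU (hBclosed b a hbB hab.symm haA)
          · exact h
        rw [this]; ring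
      rw [hsum, hx0] at hineq
      norm_num at hineq
    -- assemble the decomposition from G0-components
    set P : Set (Set V) := {S | ∃ w : V, S = {z : V | (zeroSub G x).Reachable w z}} with hPdef
    have hPart : Setoid.IsPartition P := by
      constructor
      · rintro ⟨w, hw⟩
        have hmem : w ∈ {z | G0.Reachable w z} := SimpleGraph.Reachable.refl w
        rw [← hw] at hmem
        exact hmem
      · intro a
        refine ⟨{z | G0.Reachable a z}, ⟨⟨a, rfl⟩, SimpleGraph.Reachable.refl a⟩, ?_⟩
        rintro S ⟨⟨w, rfl⟩, ha⟩
        ext z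
        exact ⟨fun hz => (ha : G0.Reachable w a).symm.trans hz,
          fun hz => (ha : G0.Reachable w a).trans hz⟩
    have hConn : ∀ S ∈ P, (G.induce S).Connected := by
      rintro S ⟨w, rfl⟩
      rw [SimpleGraph.connected_iff]
      refine ⟨?_, ⟨⟨w, SimpleGraph.Reachable.refl w⟩⟩⟩
      rintro ⟨a, ha⟩ ⟨b, hb⟩
      obtain ⟨W⟩ := ((ha : G0.Reachable w a).symm.trans hb : G0.Reachable a b)
      have hsupp : ∀ z ∈ W.support, z ∈ {z | G0.Reachable w z} := by
        intro z hz
        exact (ha : G0.Reachable w a).trans ⟨W.takeUntil z hz⟩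
      exact reachable_induce_of_walk hG0le W hsupp
    refine ⟨P, ⟨hPart, hConn⟩, ?_⟩
    funext e
    induction e using Sym2.ind with
    | _ a b =>
      by_cases he : s(a, b) ∈ Gh.edgeSet
      · rcases h01 _ he with hxe | hxe
        · rw [hxe]
          refine (if_neg ?_).symm
          rintro ⟨-, hcr⟩
          have hsb : SameBlock P a b := by
            obtain ⟨W⟩ := hzero a b he hxe
            exact ⟨{z | G0.Reachable a z}, ⟨a, rfl⟩, SimpleGraph.Reachable.refl a, ⟨W⟩⟩
          exact (crosses_iff P a b).1 hcr hsb
        · rw [hxe]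
          refine (if_pos ⟨he, (crosses_iff P a b).2 ?_⟩).symm
          rintro ⟨S, ⟨w, rfl⟩, ha, hb⟩
          exact hone a b he hxe ((ha : G0.Reachable w a).symm.trans hb)
      · rw [h0 _ he]
        exact (if_neg (fun h => he h.1)).symm
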